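/- Fix an integer k ≥ 2. For j ≥ 0 set (z;z)_j = ∏_{i=1}^{j} (1 − z^i) and h_j = z^{j(j+1)} · ∏_{i=1}^{j} (1 + (k−1) z^i), and for ℓ ≥ 1 define A_ℓ = Σ_{j=0}^∞ z^{ℓj} h_j (z;z)_j^{−2} ∈ ℚ[[z]]. Then for all ℓ ≥ 1: A_{ℓ+2} − 2 A_{ℓ+1} + A_ℓ = z^{ℓ+2} A_{ℓ+2} + (k − 1) z^{ℓ+3} A_{ℓ+3}. -/

import Mathlib

/-- The `q`-Pochhammer symbol `(z;z)_j = ∏_{i=1}^{j} (1 − zⁱ)` in `ℚ[[z]]`. -/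
noncomputable def qPoch (j : ℕ) : PowerSeries ℚ :=
  ∏ i ∈ Finset.Icc 1 j, (1 - (PowerSeries.X : PowerSeries ℚ) ^ i)

/-- `h_j = z^{j(j+1)} · ((1−k)z; z)_j = z^{j(j+1)} · ∏_{i=1}^{j} (1 + (k−1) zⁱ)`. -/
noncomputable def hSer (k j : ℕ) : PowerSeries ℚ :=
  (PowerSeries.X : PowerSeries ℚ) ^ (j * (j + 1)) *
    ∏ i ∈ Finset.Icc 1 j, (1 + PowerSeries.C ((k : ℚ) - 1) * PowerSeries.X ^ i)

/-- The `j`-th summand `z^{ℓj} h_j (z;z)_j^{−2}` of `A_ℓ`. -/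
noncomputable def Aterm (k ℓ j : ℕ) : PowerSeries ℚ :=
  (PowerSeries.X : PowerSeries ℚ) ^ (ℓ * j) * hSer k j * ((qPoch j)⁻¹) ^ 2

/-- `A_ℓ = Σ_{j=0}^∞ z^{ℓj} h_j (z;z)_j^{−2}`.  The series converges in the `z`-adic
topology since `h_j` is divisible by `z^{j(j+1)}`; the coefficient of `zⁿ` only receives
contributions from the finitely many `j ≤ n`, so the sum may be truncated there. -/
noncomputable def Aser (k ℓ : ℕ) : PowerSeries ℚ :=
  PowerSeries.mk fun n =>
    ∑ j ∈ Finset.range (n + 1), PowerSeries.coeff n (Aterm k ℓ j)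

/-- The factor `ℓ + Σ_{m=1}^{j} (1 + 2(1 − z^m)^{−1} − (1 + (k−1) z^m)^{−1})`. -/
noncomputable def Bfactor (k ℓ j : ℕ) : PowerSeries ℚ :=
  (ℓ : PowerSeries ℚ) +
    ∑ m ∈ Finset.Icc 1 j,
      (1 + 2 * ((1 - (PowerSeries.X : PowerSeries ℚ) ^ m)⁻¹) -
        ((1 + PowerSeries.C ((k : ℚ) - 1) * PowerSeries.X ^ m)⁻¹))

/-- The `j`-th summand of `B_ℓ`. -/
noncomputable def Bterm (k ℓ j : ℕ) : PowerSeries ℚ :=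
  Aterm k ℓ j * Bfactor k ℓ j

/-- `B_ℓ = Σ_{j=0}^∞ z^{ℓj} h_j (z;z)_j^{−2} ·
(ℓ + Σ_{m=1}^{j} (1 + 2(1 − z^m)^{−1} − (1 + (k−1) z^m)^{−1}))`, the series converging
`z`-adically since `h_j` is divisible by `z^{j(j+1)}`. -/
noncomputable def Bser (k ℓ : ℕ) : PowerSeries ℚ :=
  PowerSeries.mk fun n =>
    ∑ j ∈ Finset.range (n + 1), PowerSeries.coeff n (Bterm k ℓ j)

open PowerSeries

lemma qPoch_succ (j : ℕ) : qPoch (j+1) = qPoch j * (1 - (X : ℚ⟦X⟧) ^ (j+1)) := by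
  rw [qPoch, qPoch, Finset.prod_Icc_succ_top (by omega)]

lemma hSer_succ (k j : ℕ) : hSer k (j+1) =
    (X : ℚ⟦X⟧) ^ (2*(j+1)) * ((1 + C ((k:ℚ)-1) * X ^ (j+1)) * hSer k j) := by
  rw [hSer, hSer, Finset.prod_Icc_succ_top (by omega)]
  ring

lemma Aterm_zero (k m : ℕ) : Aterm k m 0 = 1 := by
  simp [Aterm, hSer, qPoch]

lemma term_key (k ℓ j : ℕ) :
    Aterm k (ℓ+2) (j+1) - 2 * Aterm k (ℓ+1) (j+1) + Aterm k ℓ (j+1) =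
      (X : ℚ⟦X⟧)^(ℓ+2) * Aterm k (ℓ+2) j +
        C ((k:ℚ)-1) * X^(ℓ+3) * Aterm k (ℓ+3) j := by
  have h1 : (1 - (X:ℚ⟦X⟧)^(j+1)) * (qPoch (j+1))⁻¹ = (qPoch j)⁻¹ := by
    rw [qPoch_succ, PowerSeries.mul_inv_rev, ← mul_assoc,
      PowerSeries.mul_inv_cancel _ (by simp), one_mul]
  simp only [Aterm, hSer_succ]
  linear_combination ((X:ℚ⟦X⟧)^(ℓ*(j+1)) * X^(2*(j+1)) * (1 + C ((k:ℚ)-1) * X^(j+1))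
      * hSer k j * ((1 - X^(j+1)) * (qPoch (j+1))⁻¹ + (qPoch j)⁻¹)) * h1

lemma partial_sum_identity (k ℓ N : ℕ) :
    (∑ j ∈ Finset.range (N+1), Aterm k (ℓ+2) j)
        - 2 * ∑ j ∈ Finset.range (N+1), Aterm k (ℓ+1) j
        + ∑ j ∈ Finset.range (N+1), Aterm k ℓ j
      = (X : ℚ⟦X⟧)^(ℓ+2) * ∑ j ∈ Finset.range N, Aterm k (ℓ+2) j
        + C ((k:ℚ)-1) * X^(ℓ+3) * ∑ j ∈ Finset.range N, Aterm k (ℓ+3) j := by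
  calc (∑ j ∈ Finset.range (N+1), Aterm k (ℓ+2) j)
        - 2 * ∑ j ∈ Finset.range (N+1), Aterm k (ℓ+1) j
        + ∑ j ∈ Finset.range (N+1), Aterm k ℓ j
      = ∑ j ∈ Finset.range N,
          (Aterm k (ℓ+2) (j+1) - 2 * Aterm k (ℓ+1) (j+1) + Aterm k ℓ (j+1)) := by
        rw [Finset.sum_range_succ', Finset.sum_range_succ', Finset.sum_range_succ',
          Aterm_zero, Aterm_zero, Aterm_zero, Finset.sum_add_distrib,
          Finset.sum_sub_distrib, ← Finset.mul_sum]
        ring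
    _ = ∑ j ∈ Finset.range N,
          ((X : ℚ⟦X⟧)^(ℓ+2) * Aterm k (ℓ+2) j +
            C ((k:ℚ)-1) * X^(ℓ+3) * Aterm k (ℓ+3) j) :=
        Finset.sum_congr rfl fun j _ => term_key k ℓ j
    _ = _ := by rw [Finset.sum_add_distrib, Finset.mul_sum, Finset.mul_sum]

lemma coeff_Aterm_eq_zero (k m j n : ℕ) (h : n < j) :
    PowerSeries.coeff n (Aterm k m j) = 0 := by
  have hdvd : (X : ℚ⟦X⟧)^j ∣ Aterm k m j := by
    refine ⟨(X : ℚ⟦X⟧)^(m*j) * ((X : ℚ⟦X⟧)^(j*j) *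
      ∏ i ∈ Finset.Icc 1 j, (1 + C ((k:ℚ)-1) * X^i)) * ((qPoch j)⁻¹)^2, ?_⟩
    rw [Aterm, hSer]
    ring
  exact PowerSeries.X_pow_dvd_iff.1 hdvd n h

lemma coeff_Aser (k m n N : ℕ) (h : n < N) :
    PowerSeries.coeff n (Aser k m) =
      ∑ j ∈ Finset.range N, PowerSeries.coeff n (Aterm k m j) := by
  rw [Aser, PowerSeries.coeff_mk]
  refine Finset.sum_subset (Finset.range_subset_range.2 h) fun j _ hj => ?_
  exact coeff_Aterm_eq_zero k m j n (by simpa using hj)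

lemma coeff_Aser_sum (k m n N : ℕ) (h : n < N) :
    PowerSeries.coeff n (Aser k m) =
      PowerSeries.coeff n (∑ j ∈ Finset.range N, Aterm k m j) := by
  rw [map_sum, coeff_Aser k m n N h]

lemma coeff_X_pow_mul_Aser (k m d n N : ℕ) (h : n ≤ N) :
    PowerSeries.coeff n ((X : ℚ⟦X⟧)^d * Aser k m) =
      PowerSeries.coeff n ((X : ℚ⟦X⟧)^d * ∑ j ∈ Finset.range (N+1), Aterm k m j) := by
  rcases le_or_gt d n with hd | hd
  · obtain ⟨e, rfl⟩ : ∃ e, n = e + d := ⟨n - d, by omega⟩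
    rw [PowerSeries.coeff_X_pow_mul, PowerSeries.coeff_X_pow_mul]
    exact coeff_Aser_sum k m e (N+1) (by omega)
  · rw [PowerSeries.coeff_X_pow_mul', PowerSeries.coeff_X_pow_mul',
      if_neg (by omega), if_neg (by omega)]

/-- For all `ℓ ≥ 1`:
`A_{ℓ+2} − 2 A_{ℓ+1} + A_ℓ = z^{ℓ+2} A_{ℓ+2} + (k − 1) z^{ℓ+3} A_{ℓ+3}`. -/
theorem A_solves_recurrence (k : ℕ) (hk : 2 ≤ k) (ℓ : ℕ) (hℓ : 1 ≤ ℓ) :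
    Aser k (ℓ + 2) - 2 * Aser k (ℓ + 1) + Aser k ℓ =
      (PowerSeries.X : PowerSeries ℚ) ^ (ℓ + 2) * Aser k (ℓ + 2) +
        PowerSeries.C ((k : ℚ) - 1) * (PowerSeries.X : PowerSeries ℚ) ^ (ℓ + 3) *
          Aser k (ℓ + 3) := by
  apply PowerSeries.ext
  intro n
  have key := congrArg (PowerSeries.coeff n) (partial_sum_identity k ℓ (n+1))
  set c : ℚ := (k:ℚ) - 1 with hc
  simp only [two_mul, map_add, map_sub, mul_assoc, PowerSeries.coeff_C_mul] at key ⊢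
  rw [coeff_Aser_sum k (ℓ+2) n (n+1+1) (by omega),
    coeff_Aser_sum k (ℓ+1) n (n+1+1) (by omega),
    coeff_Aser_sum k ℓ n (n+1+1) (by omega),
    coeff_X_pow_mul_Aser k (ℓ+2) (ℓ+2) n n le_rfl,
    coeff_X_pow_mul_Aser k (ℓ+3) (ℓ+3) n n le_rfl]
  linarith [key]
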